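/- Let Φ : ℝ^d → ℝ^n be of class C¹ and 𝓡 its set of regular points (points where the differential is surjective). Let X be the restriction of Φ to 𝓡, a submersion onto Y = Φ(𝓡). Then for a Borel set E ⊆ Y, the Lebesgue measure of E in ℝ^n is zero if and only if the Lebesgue measure of Φ⁻¹(E) ∩ 𝓡 in ℝ^d is zero. -/

import Mathlib

open MeasureTheory

lemma image_null_iff_aux {X Y : Type*} [NormedAddCommGroup X] [NormedSpace ℝ X]
    [MeasurableSpace X] [BorelSpace X] [FiniteDimensional ℝ X]
    [NormedAddCommGroup Y] [NormedSpace ℝ Y] [MeasurableSpace Y] [BorelSpace Y]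
    (μ : Measure X) (ν : Measure Y) [μ.IsAddHaarMeasure] [ν.IsAddHaarMeasure]
    (e : X ≃L[ℝ] Y) (S : Set X) : ν (e '' S) = 0 ↔ μ S = 0 := by
  haveI : FiniteDimensional ℝ Y := Module.Finite.equiv e.toLinearEquiv
  haveI : (μ.map e).IsAddHaarMeasure := e.isAddHaarMeasure_map μ
  have hmap : μ.map e = Measure.addHaarScalarFactor (μ.map ⇑e) ν • ν :=
    Measure.isAddLeftInvariant_eq_smul _ _
  have hemb : MeasurableEmbedding (⇑e) := e.toHomeomorph.measurableEmbedding
  have h1 : (μ.map ⇑e) (⇑e '' S) = μ S := by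
    rw [hemb.map_apply, Set.preimage_image_eq _ e.injective]
  have hc : (0 : NNReal) < Measure.addHaarScalarFactor (μ.map ⇑e) ν :=
    Measure.addHaarScalarFactor_pos_of_isAddHaarMeasure _ _
  rw [← h1, hmap]
  simp only [Measure.smul_apply, smul_eq_zero]
  simp [hc.ne']

lemma image_null_of_diffOn {X Y : Type*} [NormedAddCommGroup X] [NormedSpace ℝ X]
    [MeasurableSpace X] [BorelSpace X] [FiniteDimensional ℝ X]
    [NormedAddCommGroup Y] [NormedSpace ℝ Y] [MeasurableSpace Y] [BorelSpace Y]
    [FiniteDimensional ℝ Y]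
    (hdim : Module.finrank ℝ X = Module.finrank ℝ Y)
    (μ : Measure X) (ν : Measure Y) [μ.IsAddHaarMeasure] [ν.IsAddHaarMeasure]
    {f : X → Y} {s : Set X} (hf : DifferentiableOn ℝ f s) (hs : μ s = 0) :
    ν (f '' s) = 0 := by
  let e : Y ≃L[ℝ] X := (LinearEquiv.ofFinrankEq Y X hdim.symm).toContinuousLinearEquiv
  have hg : DifferentiableOn ℝ (fun x => e (f x)) s :=
    (e.toContinuousLinearMap.differentiable.comp_differentiableOn hf)
  have h0 : μ ((fun x => e (f x)) '' s) = 0 :=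
    addHaar_image_eq_zero_of_differentiableOn_of_addHaar_eq_zero μ hg hs
  have him : f '' s = e.symm '' ((fun x => e (f x)) '' s) := by
    rw [Set.image_image]; simp
  rw [him]
  exact (image_null_iff_aux μ ν e.symm _).mpr h0

lemma isOpen_regular {d n : ℕ} {Φ : EuclideanSpace ℝ (Fin d) → EuclideanSpace ℝ (Fin n)}
    (hΦ : ContDiff ℝ 1 Φ) : IsOpen {x | Function.Surjective (fderiv ℝ Φ x)} := by
  rw [isOpen_iff_mem_nhds]
  intro x₀ hx₀
  obtain ⟨B, hB⟩ := (fderiv ℝ Φ x₀).toLinearMap.exists_rightInverse_of_surjective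
      (LinearMap.range_eq_top.2 hx₀)
  set B' := LinearMap.toContinuousLinearMap B with hB'
  have hcont : Continuous fun x => (fderiv ℝ Φ x).comp B' :=
    (hΦ.continuous_fderiv one_ne_zero).clm_comp continuous_const
  have hunit : (fun x => (fderiv ℝ Φ x).comp B') ⁻¹' {T | IsUnit T} ∈ nhds x₀ := by
    apply hcont.continuousAt.preimage_mem_nhds
    apply Units.isOpen.mem_nhds
    have : (fderiv ℝ Φ x₀).comp B' = 1 :=
      ContinuousLinearMap.ext fun y => LinearMap.congr_fun hB y
    rw [Set.mem_setOf_eq, this]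
    exact isUnit_one
  filter_upwards [hunit] with x hx
  obtain ⟨u, hu⟩ := hx
  intro y
  refine ⟨B' (u.inv y), ?_⟩
  have h1 : (fderiv ℝ Φ x) (B' (u.inv y)) = (u.val * u.inv) y := by rw [hu]; rfl
  rw [h1, u.val_inv, ContinuousLinearMap.one_apply]

set_option maxHeartbeats 1000000 in
lemma key {d n : ℕ} {Φ : EuclideanSpace ℝ (Fin d) → EuclideanSpace ℝ (Fin n)}
    (hΦ : ContDiff ℝ 1 Φ) {x₀ : EuclideanSpace ℝ (Fin d)}
    (hx₀ : Function.Surjective (fderiv ℝ Φ x₀)) (E : Set (EuclideanSpace ℝ (Fin n))) :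
    (volume E = 0 → ∃ U ∈ nhds x₀, volume (Φ ⁻¹' E ∩ U) = 0) ∧
    (volume (Φ ⁻¹' E ∩ {x | Function.Surjective (fderiv ℝ Φ x)}) = 0 →
      ∃ W ∈ nhds (Φ x₀), volume (E ∩ W) = 0) := by
  set T : EuclideanSpace ℝ (Fin d) →L[ℝ] EuclideanSpace ℝ (Fin n) := fderiv ℝ Φ x₀ with hT
  set K : Submodule ℝ (EuclideanSpace ℝ (Fin d)) := LinearMap.ker T.toLinearMap with hK
  set P : EuclideanSpace ℝ (Fin d) →L[ℝ] K := K.orthogonalProjectionOnto with hP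
  set g : EuclideanSpace ℝ (Fin d) → EuclideanSpace ℝ (Fin n) × K := fun x => (Φ x, P x) with hg
  set A : EuclideanSpace ℝ (Fin d) →L[ℝ] EuclideanSpace ℝ (Fin n) × K := T.prod P with hA
  have hAinj : Function.Injective A := by
    rw [injective_iff_map_eq_zero]
    intro x hx
    have h1 : T x = 0 := congrArg Prod.fst hx
    have h2 : P x = 0 := congrArg Prod.snd hx
    have hxK : x ∈ K := LinearMap.mem_ker.2 h1
    have h3 := Submodule.orthogonalProjectionOnto_mem_subspace_eq_self (𝕜 := ℝ) (⟨x, hxK⟩ : K)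
    have h4 : P x = ⟨x, hxK⟩ := h3
    rw [h2] at h4
    simpa using congrArg Subtype.val h4.symm
  have hdim : Module.finrank ℝ (EuclideanSpace ℝ (Fin d)) =
      Module.finrank ℝ (EuclideanSpace ℝ (Fin n) × K) := by
    have h1 := LinearMap.finrank_range_add_finrank_ker T.toLinearMap
    have hsurj : Function.Surjective T.toLinearMap := hx₀
    have h2 : LinearMap.range T.toLinearMap = ⊤ := LinearMap.range_eq_top.2 hsurj
    have h3 : LinearMap.ker T.toLinearMap = K := rfl
    rw [h2, finrank_top, h3] at h1
    rw [Module.finrank_prod]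
    omega
  have hAbij : Function.Bijective A.toLinearMap :=
    ⟨hAinj, (LinearMap.injective_iff_surjective_of_finrank_eq_finrank hdim).mp hAinj⟩
  set e := (LinearEquiv.ofBijective A.toLinearMap hAbij).toContinuousLinearEquiv with he
  have hecoe : (e : _ →L[ℝ] _) = A := by ext x <;> rfl
  have hge : HasFDerivAt g (e : _ →L[ℝ] _) x₀ := by
    rw [hecoe, hA]
    exact ((hΦ.differentiable one_ne_zero x₀).hasFDerivAt).prodMk P.hasFDerivAt
  have hgc : ContDiffAt ℝ 1 g x₀ := (hΦ.prodMk P.contDiff).contDiffAt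
  set h := hgc.toOpenPartialHomeomorph g hge one_ne_zero with hh
  have hcoe : (h : _ → _) = g := ContDiffAt.toOpenPartialHomeomorph_coe hgc hge one_ne_zero
  have hx₀s : x₀ ∈ h.source := ContDiffAt.mem_toOpenPartialHomeomorph_source hgc hge one_ne_zero
  have hgt : g x₀ ∈ h.target := ContDiffAt.image_mem_toOpenPartialHomeomorph_target hgc hge one_ne_zero
  have hsymm : ContDiffAt ℝ 1 h.symm (g x₀) := hgc.to_localInverse hge one_ne_zero
  obtain ⟨V', hV'mem, hV'⟩ : ∃ u ∈ nhds (g x₀), ContDiffOn ℝ 1 (h.symm) u :=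
    hsymm.contDiffOn le_rfl (by simp)
  haveI : (volume : Measure (EuclideanSpace ℝ (Fin n) × K)).IsAddHaarMeasure :=
    Measure.prod.instIsAddHaarMeasure volume volume
  have hRopen : IsOpen {x | Function.Surjective (fderiv ℝ Φ x)} := isOpen_regular hΦ
  set V := interior V' ∩ (h.target ∩ h.symm ⁻¹' {x | Function.Surjective (fderiv ℝ Φ x)}) with hV
  have hVopen : IsOpen V := isOpen_interior.inter (h.isOpen_inter_preimage_symm hRopen)
  have hx₀R : h.symm (g x₀) = x₀ := by rw [← hcoe]; exact h.left_inv hx₀s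
  have hgV : g x₀ ∈ V :=
    ⟨mem_interior_iff_mem_nhds.2 hV'mem, hgt, by rw [Set.mem_preimage, hx₀R]; exact hx₀⟩
  set U := h.source ∩ h ⁻¹' V with hU
  have hUopen : IsOpen U := h.isOpen_inter_preimage hVopen
  have hUx : x₀ ∈ U := ⟨hx₀s, by show h x₀ ∈ V; rw [hcoe]; exact hgV⟩
  have hprodvol : ∀ (S : Set (EuclideanSpace ℝ (Fin n))) (B : Set K),
      (volume : Measure (EuclideanSpace ℝ (Fin n) × K)) (S ×ˢ B) = volume S * volume B :=
    fun S B => (Measure.prod_prod (μ := volume) (ν := volume) (s := S) (t := B) :)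
  constructor
  · intro hE0
    refine ⟨U, hUopen.mem_nhds hUx, ?_⟩
    have hsub : Φ ⁻¹' E ∩ U ⊆ h.symm '' ((E ×ˢ (Set.univ : Set K)) ∩ V) := by
      rintro x ⟨hxE, hxs, hxV⟩
      refine ⟨h x, ⟨?_, hxV⟩, h.left_inv hxs⟩
      rw [hcoe]
      exact ⟨hxE, trivial⟩
    refine measure_mono_null hsub ?_
    have hnull : (volume : Measure (EuclideanSpace ℝ (Fin n) × K))
        ((E ×ˢ (Set.univ : Set K)) ∩ V) = 0 := by
      refine measure_mono_null Set.inter_subset_left ?_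
      rw [hprodvol, hE0, zero_mul]
    have hsubV' : (E ×ˢ (Set.univ : Set K)) ∩ V ⊆ V' := by
      rintro p ⟨-, hp⟩
      rw [hV] at hp
      exact interior_subset hp.1
    exact image_null_of_diffOn hdim.symm volume volume
      ((hV'.mono hsubV').differentiableOn one_ne_zero) hnull
  · intro h0
    have hVnhds : V ∈ nhds (Φ x₀, P x₀) := hVopen.mem_nhds hgV
    obtain ⟨W, hWmem, B, hBmem, hWB⟩ := mem_nhds_prod_iff.1 hVnhds
    refine ⟨W, hWmem, ?_⟩
    have hsub : (E ∩ W) ×ˢ B ⊆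
        g '' (Φ ⁻¹' E ∩ {x | Function.Surjective (fderiv ℝ Φ x)} ∩ U) := by
      rintro ⟨y, z⟩ ⟨⟨hyE, hyW⟩, hzB⟩
      have hpV : (y, z) ∈ V := hWB ⟨hyW, hzB⟩
      have hpt : (y, z) ∈ h.target := hpV.2.1
      have hback : g (h.symm (y, z)) = (y, z) := by rw [← hcoe]; exact h.right_inv hpt
      refine ⟨h.symm (y, z), ⟨⟨?_, hpV.2.2⟩, h.map_target hpt, ?_⟩, hback⟩
      · show Φ (h.symm (y, z)) ∈ E
        have hfst : Φ (h.symm (y, z)) = y := congrArg Prod.fst hback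
        rw [hfst]; exact hyE
      · show h (h.symm (y, z)) ∈ V
        rw [h.right_inv hpt]; exact hpV
    have himg : (volume : Measure (EuclideanSpace ℝ (Fin n) × K))
        (g '' (Φ ⁻¹' E ∩ {x | Function.Surjective (fderiv ℝ Φ x)} ∩ U)) = 0 :=
      image_null_of_diffOn hdim volume volume
        (((hΦ.prodMk P.contDiff).differentiable one_ne_zero).differentiableOn)
        (measure_mono_null Set.inter_subset_left h0)
    have hEW := measure_mono_null hsub himg
    rw [hprodvol] at hEW
    have hBpos : volume B ≠ 0 := by
      have hpos : 0 < volume (interior B) :=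
        isOpen_interior.measure_pos volume ⟨_, mem_interior_iff_mem_nhds.2 hBmem⟩
      exact fun h' => (lt_of_lt_of_le hpos (measure_mono interior_subset)).ne' h'
    rcases mul_eq_zero.1 hEW with h' | h'
    · exact h'
    · exact absurd h' hBpos

open MeasureTheory

/-- Let `Φ : ℝᵈ → ℝⁿ` be C¹ and `𝓡` its (open) set of regular points,
so that `Φ` restricted to `𝓡` is a submersion onto `Y = Φ(𝓡)`. Then a Borel set `E ⊆ Y`
is Lebesgue negligible in `ℝⁿ` if and only if `Φ⁻¹(E) ∩ 𝓡` is Lebesgue negligible in `ℝᵈ`. -/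
theorem stmt_4
    (n d : ℕ)
    (Φ : EuclideanSpace ℝ (Fin d) → EuclideanSpace ℝ (Fin n))
    (hΦ : ContDiff ℝ 1 Φ)
    (R : Set (EuclideanSpace ℝ (Fin d)))
    (hR : R = {x | Function.Surjective (fderiv ℝ Φ x)})
    (E : Set (EuclideanSpace ℝ (Fin n)))
    (hE : MeasurableSet E) (hEY : E ⊆ Φ '' R) :
    volume E = 0 ↔ volume (Φ ⁻¹' E ∩ R) = 0 := by
  subst hR
  constructor
  · intro hE0
    apply measure_null_of_locally_null
    intro x hx
    obtain ⟨U, hU, hnull⟩ := (key hΦ hx.2 E).1 hE0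
    refine ⟨(Φ ⁻¹' E ∩ {x | Function.Surjective (fderiv ℝ Φ x)}) ∩ U,
      Filter.inter_mem self_mem_nhdsWithin (nhdsWithin_le_nhds hU), ?_⟩
    refine measure_mono_null ?_ hnull
    exact fun z hz => ⟨hz.1.1, hz.2⟩
  · intro h0
    apply measure_null_of_locally_null
    intro y hy
    obtain ⟨x, hxR, rfl⟩ := hEY hy
    obtain ⟨W, hW, hnull⟩ := (key hΦ hxR E).2 h0
    exact ⟨E ∩ W, Filter.inter_mem self_mem_nhdsWithin (nhdsWithin_le_nhds hW), hnull⟩
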